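/- Every language in PostQAL is in QAL: if L ⊆ Σ* is recognized with some error bound ε < 1/2 by an RT-PostQFA, then there exists an RT-QFA whose acceptance probability exceeds 1/2 exactly on the members of L, i.e. L ∈ QAL with cutpoint 1/2. -/

import Mathlib

noncomputable section

/-- The input alphabet extended with the two endmarkers `¢` and `$`. -/
inductive ESym (α : Type) : Type where
  | cent : ESym α
  | dollar : ESym α
  | letter : α → ESym α

/-- The diagonal 0-1 projection matrix supported on a set of states. -/
def projM {m : ℕ} (S : Finset (Fin m)) : Matrix (Fin m) (Fin m) ℂ :=
  Matrix.diagonal (fun i => if i ∈ S then 1 else 0)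

/-- The density matrix obtained by applying, in order, the Kraus families for
`¢`, the letters of `w`, and `$` to the initial density matrix `|q₁⟩⟨q₁|`. -/
def qRun {α : Type} {n : ℕ} {k : ESym α → ℕ}
    (E : ∀ σ : ESym α, Fin (k σ) → Matrix (Fin (n + 1)) (Fin (n + 1)) ℂ)
    (w : List α) : Matrix (Fin (n + 1)) (Fin (n + 1)) ℂ :=
  (ESym.cent :: (w.map ESym.letter ++ [ESym.dollar])).foldl
    (fun ρ σ => ∑ i : Fin (k σ), E σ i * ρ * (E σ i).conjTranspose)
    (Matrix.single 0 0 1)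

/-- A real-time quantum finite automaton with postselection (RT-PostQFA). -/
structure PostQFA (α : Type) where
  n : ℕ
  k : ESym α → ℕ
  E : ∀ σ : ESym α, Fin (k σ) → Matrix (Fin (n + 1)) (Fin (n + 1)) ℂ
  kraus : ∀ σ : ESym α, ∑ i : Fin (k σ), (E σ i).conjTranspose * E σ i = 1
  Qpa : Finset (Fin (n + 1))
  Qpr : Finset (Fin (n + 1))
  disj : Disjoint Qpa Qpr
  postPos : ∀ w : List α,
    0 < ((projM Qpa * qRun E w).trace).re + ((projM Qpr * qRun E w).trace).re

/-- Acceptance probability before postselection. -/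
def PostQFA.pacc {α : Type} (M : PostQFA α) (w : List α) : ℝ :=
  ((projM M.Qpa * qRun M.E w).trace).re

/-- Rejection probability before postselection. -/
def PostQFA.prej {α : Type} (M : PostQFA α) (w : List α) : ℝ :=
  ((projM M.Qpr * qRun M.E w).trace).re

/-- Normalized acceptance probability of an RT-PostQFA. -/
def PostQFA.fa {α : Type} (M : PostQFA α) (w : List α) : ℝ :=
  M.pacc w / (M.pacc w + M.prej w)

/-- Recognition of a language with error bound `ε`. -/
def PostQFA.Recognizes {α : Type} (M : PostQFA α) (L : Set (List α)) (ε : ℝ) : Prop :=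
  ∀ w : List α, (w ∈ L → 1 - ε ≤ M.fa w) ∧ (w ∉ L → M.fa w ≤ ε)

/-- The class of languages recognized by RT-PostQFAs with bounded error. -/
def PostQAL {α : Type} (L : Set (List α)) : Prop :=
  ∃ (M : PostQFA α) (ε : ℝ), 0 ≤ ε ∧ ε < 1 / 2 ∧ M.Recognizes L ε

/-- Recognition with zero error: `fa = 1` on members, `fa = 0` on non-members. -/
def PostQFA.RecognizesZero {α : Type} (M : PostQFA α) (L : Set (List α)) : Prop :=
  ∀ w : List α, (w ∈ L → M.fa w = 1) ∧ (w ∉ L → M.fa w = 0)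

/-- The class of languages recognized by RT-PostQFAs with zero error. -/
def ZPostQAL {α : Type} (L : Set (List α)) : Prop :=
  ∃ M : PostQFA α, M.RecognizesZero L

/-- A standard real-time quantum finite automaton (RT-QFA). -/
structure QFA (α : Type) where
  n : ℕ
  k : ESym α → ℕ
  E : ∀ σ : ESym α, Fin (k σ) → Matrix (Fin (n + 1)) (Fin (n + 1)) ℂ
  kraus : ∀ σ : ESym α, ∑ i : Fin (k σ), (E σ i).conjTranspose * E σ i = 1
  Qa : Finset (Fin (n + 1))

/-- Acceptance probability of an RT-QFA. -/
def QFA.fa {α : Type} (M : QFA α) (w : List α) : ℝ :=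
  ((projM M.Qa * qRun M.E w).trace).re

open Matrix
namespace PQAL

/-- one channel step -/
def step {m : ℕ} {ι : Type*} [Fintype ι] (E : ι → Matrix (Fin m) (Fin m) ℂ)
    (ρ : Matrix (Fin m) (Fin m) ℂ) :
    Matrix (Fin m) (Fin m) ℂ := ∑ i, E i * ρ * (E i)ᴴ

lemma trace_step {m : ℕ} {ι : Type*} [Fintype ι] (E : ι → Matrix (Fin m) (Fin m) ℂ)
    (h : ∑ i, (E i)ᴴ * E i = 1) (ρ : Matrix (Fin m) (Fin m) ℂ) :
    (step E ρ).trace = ρ.trace := by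
  unfold step
  rw [trace_sum]
  have h2 : ∀ i ∈ Finset.univ, (E i * ρ * (E i)ᴴ).trace = ((E i)ᴴ * E i * ρ).trace := by
    intro i _
    rw [trace_mul_comm, ← Matrix.mul_assoc]
  rw [Finset.sum_congr rfl h2]
  simp_rw [← trace_sum, ← Matrix.sum_mul]
  rw [h, Matrix.one_mul]

/-- the padding map -/
def pad {m : ℕ} (A : Matrix (Fin m) (Fin m) ℂ) : Matrix (Fin (m+1)) (Fin (m+1)) ℂ :=
  (Matrix.fromBlocks A 0 0 (0 : Matrix (Fin 1) (Fin 1) ℂ)).submatrix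
    finSumFinEquiv.symm finSumFinEquiv.symm

/-- the corner matrix -/
def corner (m : ℕ) : Matrix (Fin (m+1)) (Fin (m+1)) ℂ :=
  (Matrix.fromBlocks 0 0 0 (1 : Matrix (Fin 1) (Fin 1) ℂ)).submatrix
    finSumFinEquiv.symm finSumFinEquiv.symm

lemma submatrix_add' {l o p q : Type*} (A B : Matrix l o ℂ)
    (e1 : p → l) (e2 : q → o) :
    (A + B).submatrix e1 e2 = A.submatrix e1 e2 + B.submatrix e1 e2 := rfl

lemma pad_mul {m : ℕ} (A B : Matrix (Fin m) (Fin m) ℂ) : pad A * pad B = pad (A * B) := by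
  unfold pad
  rw [Matrix.submatrix_mul_equiv, Matrix.fromBlocks_multiply]
  simp

lemma pad_conjTranspose {m : ℕ} (A : Matrix (Fin m) (Fin m) ℂ) : (pad A)ᴴ = pad Aᴴ := by
  unfold pad
  rw [Matrix.conjTranspose_submatrix, Matrix.fromBlocks_conjTranspose]
  simp

lemma pad_add {m : ℕ} (A B : Matrix (Fin m) (Fin m) ℂ) : pad (A + B) = pad A + pad B := by
  unfold pad
  rw [← submatrix_add']
  rw [Matrix.fromBlocks_add]
  simp

lemma pad_sum {m k : ℕ} (f : Fin k → Matrix (Fin m) (Fin m) ℂ) :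
    pad (∑ i, f i) = ∑ i, pad (f i) := by
  induction k with
  | zero =>
      simp only [Finset.univ_eq_empty, Finset.sum_empty]
      unfold pad
      simp
  | succ k ih => rw [Fin.sum_univ_castSucc, Fin.sum_univ_castSucc, pad_add, ih]

lemma pad_one {m : ℕ} : pad (1 : Matrix (Fin m) (Fin m) ℂ) + corner m = 1 := by
  unfold pad corner
  rw [← submatrix_add']
  rw [show (Matrix.fromBlocks (1 : Matrix (Fin m) (Fin m) ℂ) 0 0 0 +
      Matrix.fromBlocks 0 0 0 (1 : Matrix (Fin 1) (Fin 1) ℂ)) = Matrix.fromBlocks 1 0 0 1 by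
    rw [Matrix.fromBlocks_add]; simp]
  rw [Matrix.fromBlocks_one]
  exact Matrix.submatrix_one_equiv finSumFinEquiv.symm

lemma corner_mul_pad {m : ℕ} (A : Matrix (Fin m) (Fin m) ℂ) : corner m * pad A = 0 := by
  unfold pad corner
  rw [Matrix.submatrix_mul_equiv, Matrix.fromBlocks_multiply]
  simp

lemma pad_mul_corner {m : ℕ} (A : Matrix (Fin m) (Fin m) ℂ) : pad A * corner m = 0 := by
  unfold pad corner
  rw [Matrix.submatrix_mul_equiv, Matrix.fromBlocks_multiply]
  simp

lemma corner_conjTranspose {m : ℕ} : (corner m)ᴴ = corner m := by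
  unfold corner
  rw [Matrix.conjTranspose_submatrix, Matrix.fromBlocks_conjTranspose]
  simp

lemma corner_mul_corner {m : ℕ} : corner m * corner m = corner m := by
  unfold corner
  rw [Matrix.submatrix_mul_equiv, Matrix.fromBlocks_multiply]
  simp

lemma trace_pad {m : ℕ} (A : Matrix (Fin m) (Fin m) ℂ) : (pad A).trace = A.trace := by
  unfold pad Matrix.trace
  rw [← Equiv.sum_comp finSumFinEquiv (fun j => Matrix.diag _ j)]
  simp only [Matrix.diag, Matrix.submatrix_apply, Equiv.symm_apply_apply]
  rw [Fintype.sum_sum_type]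
  simp [Matrix.fromBlocks]

lemma pad_apply_castSucc {m : ℕ} (A : Matrix (Fin m) (Fin m) ℂ) (i j : Fin m) :
    pad A i.castSucc j.castSucc = A i j := by
  unfold pad
  have h : ∀ i : Fin m, finSumFinEquiv.symm (i.castSucc) = Sum.inl i := fun i =>
    finSumFinEquiv_symm_apply_castAdd i
  simp [Matrix.submatrix_apply, h]

lemma finSumFinEquiv_symm_last {m : ℕ} :
    finSumFinEquiv.symm (Fin.last m) = Sum.inr (0 : Fin 1) := by
  rw [Equiv.symm_apply_eq]
  apply Fin.ext
  simp [finSumFinEquiv]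

lemma pad_apply_last {m : ℕ} (A : Matrix (Fin m) (Fin m) ℂ) (j : Fin (m+1)) :
    pad A (Fin.last m) j = 0 ∧ pad A j (Fin.last m) = 0 := by
  unfold pad
  constructor <;>
  · simp only [Matrix.submatrix_apply, finSumFinEquiv_symm_last]
    rcases finSumFinEquiv.symm j with a | a <;> simp [Matrix.fromBlocks]

variable {α : Type}

def padE (M : PostQFA α) (σ : ESym α) (i : Fin (M.k σ + 1)) :
    Matrix (Fin (M.n + 2)) (Fin (M.n + 2)) ℂ :=
  if h : (i : ℕ) < M.k σ then pad (M.E σ ⟨i, h⟩) else corner (M.n + 1)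

lemma padE_castSucc (M : PostQFA α) (σ : ESym α) (i : Fin (M.k σ)) :
    padE M σ i.castSucc = pad (M.E σ i) := by
  simp [padE, Fin.is_lt]

lemma padE_last (M : PostQFA α) (σ : ESym α) :
    padE M σ (Fin.last _) = corner (M.n + 1) := by
  simp [padE]

lemma padE_kraus (M : PostQFA α) (σ : ESym α) :
    ∑ i, (padE M σ i)ᴴ * padE M σ i = 1 := by
  rw [Fin.sum_univ_castSucc]
  simp only [padE_castSucc, padE_last, corner_conjTranspose, corner_mul_corner,
    pad_conjTranspose, pad_mul, ← pad_sum]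
  rw [M.kraus σ, pad_one]

lemma padE_step (M : PostQFA α) (σ : ESym α) (ρ : Matrix (Fin (M.n+1)) (Fin (M.n+1)) ℂ) :
    step (padE M σ) (pad ρ) = pad (step (M.E σ) ρ) := by
  unfold step
  rw [Fin.sum_univ_castSucc]
  simp only [padE_castSucc, padE_last, corner_conjTranspose,
    pad_conjTranspose, pad_mul, corner_mul_pad, Matrix.zero_mul, add_zero, ← pad_sum]

def tgt (m : ℕ) (b : Fin 2) : Fin (m + 2) := if b = 0 then 0 else Fin.last (m + 1)

def QpaE (M : PostQFA α) : Finset (Fin (M.n + 2)) := M.Qpa.map Fin.castSuccEmb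

def QprE (M : PostQFA α) : Finset (Fin (M.n + 2)) :=
  M.Qpr.map Fin.castSuccEmb ∪ {Fin.last (M.n + 1)}

def cc (M : PostQFA α) (q : Fin (M.n + 2)) (b : Fin 2) : ℝ :=
  if q ∈ QpaE M then (if b = 0 then 1 else 0)
  else if q ∈ QprE M then (if b = 0 then 0 else 1)
  else Real.sqrt 2⁻¹

lemma cc_sq_sum (M : PostQFA α) (q : Fin (M.n + 2)) :
    (cc M q 0 : ℂ) * (cc M q 0) + (cc M q 1) * (cc M q 1) = 1 := by
  unfold cc
  by_cases h1 : q ∈ QpaE M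
  · simp [h1]
  · by_cases h2 : q ∈ QprE M
    · simp [h1, h2]
    · simp only [h1, h2, if_false]
      push_cast
      rw [← Complex.ofReal_mul, Real.mul_self_sqrt (by norm_num)]
      norm_num

def G (M : PostQFA α) (p : Fin (M.n + 2) × Fin 2) :
    Matrix (Fin (M.n + 2)) (Fin (M.n + 2)) ℂ :=
  (cc M p.1 p.2 : ℂ) • Matrix.single (tgt M.n p.2) p.1 1

lemma stdBasis_conjTranspose {m : ℕ} (i j : Fin m) :
    (Matrix.single i j (1:ℂ))ᴴ = Matrix.single j i 1 := by
  ext a b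
  simp [Matrix.conjTranspose_apply, Matrix.single, and_comm]

lemma sum_stdBasis {m : ℕ} : ∑ q : Fin m, Matrix.single q q (1:ℂ) = 1 := by
  ext i j
  simp only [Finset.sum_apply, Matrix.sum_apply, Matrix.single, Matrix.of_apply,
    Matrix.one_apply]
  by_cases h : i = j
  · subst h; simp
  · rw [Finset.sum_eq_zero, if_neg h]
    intro q _
    by_cases hq : q = i
    · subst hq; simp [h]
    · simp [hq]

lemma G_kraus (M : PostQFA α) : ∑ p : Fin (M.n + 2) × Fin 2, (G M p)ᴴ * G M p = 1 := by
  unfold G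
  rw [Fintype.sum_prod_type]
  have key : ∀ (q : Fin (M.n + 2)) (b : Fin 2),
      ((cc M q b : ℂ) • Matrix.single (tgt M.n b) q (1:ℂ))ᴴ *
        ((cc M q b : ℂ) • Matrix.single (tgt M.n b) q (1:ℂ)) =
      ((cc M q b : ℂ) * (cc M q b)) • Matrix.single q q (1:ℂ) := by
    intro q b
    rw [Matrix.conjTranspose_smul, stdBasis_conjTranspose, Matrix.smul_mul,
      Matrix.mul_smul, Matrix.single_mul_single_same, smul_smul, mul_one]
    congr 1
    simp [Complex.conj_ofReal]
  simp only [key]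
  have : ∀ q : Fin (M.n + 2), ∑ b : Fin 2,
      ((cc M q b : ℂ) * (cc M q b)) • Matrix.single q q (1:ℂ) =
      Matrix.single q q 1 := by
    intro q
    rw [Fin.sum_univ_two, ← add_smul, cc_sq_sum, one_smul]
  simp only [this]
  exact sum_stdBasis

def meas (M : PostQFA α) (ρ : Matrix (Fin (M.n + 2)) (Fin (M.n + 2)) ℂ) :
    Matrix (Fin (M.n + 2)) (Fin (M.n + 2)) ℂ := step (G M) ρ

def dollarIdx (M : PostQFA α) :
    Fin ((M.k ESym.dollar + 1) * ((M.n + 2) * 2)) ≃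
      (Fin (M.k ESym.dollar + 1) × (Fin (M.n + 2) × Fin 2)) :=
  finProdFinEquiv.symm.trans (Equiv.prodCongr (Equiv.refl _) finProdFinEquiv.symm)

def dollarE (M : PostQFA α) (j : Fin ((M.k ESym.dollar + 1) * ((M.n + 2) * 2))) :
    Matrix (Fin (M.n + 2)) (Fin (M.n + 2)) ℂ :=
  G M (dollarIdx M j).2 * padE M ESym.dollar (dollarIdx M j).1

lemma dollar_kraus (M : PostQFA α) : ∑ j, (dollarE M j)ᴴ * dollarE M j = 1 := by
  unfold dollarE
  rw [← Equiv.sum_comp (dollarIdx M).symm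
    (fun p => (G M (dollarIdx M p).2 * padE M ESym.dollar (dollarIdx M p).1)ᴴ *
      (G M (dollarIdx M p).2 * padE M ESym.dollar (dollarIdx M p).1))]
  simp only [Equiv.apply_symm_apply]
  rw [Fintype.sum_prod_type]
  have : ∀ i, ∑ p : Fin (M.n + 2) × Fin 2,
      (G M p * padE M ESym.dollar i)ᴴ * (G M p * padE M ESym.dollar i) =
      (padE M ESym.dollar i)ᴴ * padE M ESym.dollar i := by
    intro i
    have : ∀ p : Fin (M.n + 2) × Fin 2,
        (G M p * padE M ESym.dollar i)ᴴ * (G M p * padE M ESym.dollar i) =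
        (padE M ESym.dollar i)ᴴ * ((G M p)ᴴ * G M p) * padE M ESym.dollar i := by
      intro p
      rw [Matrix.conjTranspose_mul]
      noncomm_ring
    simp only [this, ← Finset.sum_mul, ← Finset.mul_sum]
    rw [G_kraus, Matrix.mul_one]
  simp only [this]
  exact padE_kraus M ESym.dollar

lemma dollar_step (M : PostQFA α) (ρ : Matrix (Fin (M.n + 2)) (Fin (M.n + 2)) ℂ) :
    step (dollarE M) ρ = meas M (step (padE M ESym.dollar) ρ) := by
  unfold step meas dollarE
  rw [← Equiv.sum_comp (dollarIdx M).symm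
    (fun p => (G M (dollarIdx M p).2 * padE M ESym.dollar (dollarIdx M p).1) * ρ *
      (G M (dollarIdx M p).2 * padE M ESym.dollar (dollarIdx M p).1)ᴴ)]
  simp only [Equiv.apply_symm_apply]
  rw [Fintype.sum_prod_type, Finset.sum_comm]
  unfold step
  apply Finset.sum_congr rfl
  intro p _
  have : ∀ i, (G M p * padE M ESym.dollar i) * ρ * (G M p * padE M ESym.dollar i)ᴴ =
      G M p * (padE M ESym.dollar i * ρ * (padE M ESym.dollar i)ᴴ) * (G M p)ᴴ := by
    intro i
    rw [Matrix.conjTranspose_mul]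
    noncomm_ring
  simp only [this, ← Finset.sum_mul, ← Finset.mul_sum]

def buildk (M : PostQFA α) : ESym α → ℕ
  | ESym.dollar => (M.k ESym.dollar + 1) * ((M.n + 2) * 2)
  | ESym.cent => M.k ESym.cent + 1
  | ESym.letter a => M.k (ESym.letter a) + 1

def buildE (M : PostQFA α) :
    ∀ σ : ESym α, Fin (buildk M σ) → Matrix (Fin (M.n + 1 + 1)) (Fin (M.n + 1 + 1)) ℂ
  | ESym.dollar => dollarE M
  | ESym.cent => padE M ESym.cent
  | ESym.letter a => padE M (ESym.letter a)

def build (M : PostQFA α) : QFA α where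
  n := M.n + 1
  k := buildk M
  E := buildE M
  kraus := by
    intro σ
    cases σ with
    | dollar => exact dollar_kraus M
    | cent => exact padE_kraus M ESym.cent
    | letter a => exact padE_kraus M (ESym.letter a)
  Qa := {0}

lemma pad_std0 {m : ℕ} :
    pad (Matrix.single (0 : Fin (m+1)) 0 1) =
      Matrix.single (0 : Fin (m+2)) 0 1 := by
  ext i j
  induction i using Fin.lastCases with
  | last =>
      rw [(pad_apply_last _ j).1]
      have : Fin.last (m+1) ≠ (0 : Fin (m+2)) := by
        simp [Fin.ext_iff]
      simp [Matrix.single, Ne.symm this]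
  | cast i =>
      induction j using Fin.lastCases with
      | last =>
          rw [(pad_apply_last _ i.castSucc).2]
          have : Fin.last (m+1) ≠ (0 : Fin (m+2)) := by
            simp [Fin.ext_iff]
          simp [Matrix.single, Ne.symm this]
      | cast j =>
          rw [pad_apply_castSucc]
          simp [Matrix.single, Fin.ext_iff]

lemma fold_pad (M : PostQFA α) :
    ∀ (l : List (ESym α)), ESym.dollar ∉ l →
      ∀ ρ : Matrix (Fin (M.n + 1)) (Fin (M.n + 1)) ℂ,
      l.foldl (fun ρ σ => ∑ i : Fin (buildk M σ), buildE M σ i * ρ * (buildE M σ i)ᴴ)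
          (pad ρ) =
        pad (l.foldl (fun ρ σ => ∑ i : Fin (M.k σ), M.E σ i * ρ * (M.E σ i)ᴴ) ρ) := by
  intro l
  induction l with
  | nil => intro _ ρ; rfl
  | cons σ l ih =>
      intro hσ ρ
      simp only [List.foldl_cons]
      have hstep : (∑ i : Fin (buildk M σ), buildE M σ i * pad ρ * (buildE M σ i)ᴴ) =
          pad (∑ i : Fin (M.k σ), M.E σ i * ρ * (M.E σ i)ᴴ) := by
        cases σ with
        | dollar => exact absurd List.mem_cons_self hσ
        | cent => exact padE_step M ESym.cent ρ
        | letter a => exact padE_step M (ESym.letter a) ρ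
      rw [hstep]
      exact ih (fun h => hσ (List.mem_cons_of_mem _ h)) _

lemma qRun_build (M : PostQFA α) (w : List α) :
    qRun (buildE M) w = meas M (pad (qRun M.E w)) := by
  unfold qRun
  rw [show (ESym.cent :: (w.map ESym.letter ++ [ESym.dollar])) =
    ((ESym.cent :: w.map ESym.letter) ++ [ESym.dollar]) from rfl]
  rw [show ((ESym.cent :: w.map ESym.letter) ++ [ESym.dollar] :
      List (ESym α)) = (ESym.cent :: w.map ESym.letter) ++ [ESym.dollar] from rfl]
  rw [List.foldl_append, List.foldl_append]
  have hnod : ESym.dollar ∉ (ESym.cent :: w.map ESym.letter : List (ESym α)) := by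
    simp [List.mem_cons, List.mem_map]
  have h0 : (Matrix.single (0 : Fin (M.n + 1 + 1)) 0 1) =
      pad (Matrix.single (0 : Fin (M.n + 1)) 0 1) := pad_std0.symm
  rw [h0, fold_pad M _ hnod]
  generalize (List.foldl (fun ρ σ => ∑ i : Fin (M.k σ), M.E σ i * ρ * (M.E σ i)ᴴ)
      (Matrix.single 0 0 1) (ESym.cent :: w.map ESym.letter)) = P
  show step (dollarE M) (pad P) = meas M (pad (step (M.E ESym.dollar) P))
  rw [dollar_step, padE_step]

lemma trace_stdBasis0 {m : ℕ} :
    (Matrix.single (0 : Fin (m+1)) 0 (1:ℂ)).trace = 1 := by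
  unfold Matrix.trace
  simp [Matrix.diag, Matrix.single]

lemma trace_qRun (M : PostQFA α) (w : List α) : (qRun M.E w).trace = 1 := by
  unfold qRun
  have : ∀ (l : List (ESym α)) (ρ : Matrix (Fin (M.n + 1)) (Fin (M.n + 1)) ℂ),
      (l.foldl (fun ρ σ => ∑ i : Fin (M.k σ), M.E σ i * ρ * (M.E σ i)ᴴ) ρ).trace =
        ρ.trace := by
    intro l
    induction l with
    | nil => intro ρ; rfl
    | cons σ l ih =>
        intro ρ
        simp only [List.foldl_cons]
        rw [ih]
        exact trace_step (M.E σ) (M.kraus σ) ρ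
  rw [this, trace_stdBasis0]

lemma trace_projM {m : ℕ} (S : Finset (Fin m)) (A : Matrix (Fin m) (Fin m) ℂ) :
    (projM S * A).trace = ∑ i ∈ S, A i i := by
  unfold projM Matrix.trace
  simp only [Matrix.diag, Matrix.diagonal_mul, ite_mul, one_mul, zero_mul]
  rw [Finset.sum_ite_mem, Finset.univ_inter]

lemma std_sandwich {m : ℕ} (t q : Fin m) (ρ : Matrix (Fin m) (Fin m) ℂ) (i : Fin m) :
    (Matrix.single t q (1:ℂ) * ρ * Matrix.single q t (1:ℂ)) i i =
      if i = t then ρ q q else 0 := by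
  simp only [Matrix.mul_apply, Matrix.single, Matrix.of_apply]
  by_cases h : i = t
  · subst h
    simp [Finset.sum_ite_eq, ite_and]
  · rw [if_neg h]
    apply Finset.sum_eq_zero
    intro x _
    rw [Finset.sum_eq_zero, zero_mul]
    intro y _
    have : ¬ (t = i ∧ q = y) := fun hc => h hc.1.symm
    rw [if_neg this, zero_mul]

lemma mem_QpaE (M : PostQFA α) (q : Fin (M.n + 1)) :
    q.castSucc ∈ QpaE M ↔ q ∈ M.Qpa := by
  unfold QpaE
  rw [Finset.mem_map]
  constructor
  · rintro ⟨a, ha, he⟩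
    have : a = q := Fin.castSucc_injective _ he
    exact this ▸ ha
  · intro h
    exact ⟨q, h, rfl⟩

lemma mem_QprE (M : PostQFA α) (q : Fin (M.n + 1)) :
    q.castSucc ∈ QprE M ↔ q ∈ M.Qpr := by
  unfold QprE
  have hne : q.castSucc ≠ Fin.last (M.n + 1) := Fin.castSucc_lt_last q |>.ne
  rw [Finset.mem_union, Finset.mem_singleton, Finset.mem_map]
  constructor
  · rintro (⟨a, ha, he⟩ | h)
    · have : a = q := Fin.castSucc_injective _ he
      exact this ▸ ha
    · exact absurd h hne
  · intro h
    exact Or.inl ⟨q, h, rfl⟩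

lemma tgt_zero (m : ℕ) : tgt m 0 = 0 := rfl

lemma tgt_one_ne (m : ℕ) : (0 : Fin (m+2)) ≠ tgt m 1 := by
  unfold tgt
  simp [Fin.ext_iff]

lemma meas_trace0 (M : PostQFA α) (ρ : Matrix (Fin (M.n + 1)) (Fin (M.n + 1)) ℂ) :
    (projM ({0} : Finset (Fin (M.n + 2))) * meas M (pad ρ)).trace =
      (2⁻¹ : ℂ) * ρ.trace + 2⁻¹ * ∑ q ∈ M.Qpa, ρ q q - 2⁻¹ * ∑ q ∈ M.Qpr, ρ q q := by
  unfold meas step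
  rw [trace_projM]
  rw [Finset.sum_singleton]
  simp only [Matrix.sum_apply]
  have hterm : ∀ p : Fin (M.n + 2) × Fin 2,
      (G M p * pad ρ * (G M p)ᴴ) 0 0 =
        ((cc M p.1 p.2 : ℂ) * (cc M p.1 p.2)) *
          (if (0 : Fin (M.n+2)) = tgt M.n p.2 then pad ρ p.1 p.1 else 0) := by
    intro p
    unfold G
    rw [Matrix.conjTranspose_smul, stdBasis_conjTranspose, Matrix.smul_mul,
      Matrix.smul_mul, Matrix.mul_smul, smul_smul]
    rw [show star ((cc M p.1 p.2 : ℝ) : ℂ) = ((cc M p.1 p.2 : ℝ) : ℂ) from by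
      rw [Complex.star_def, Complex.conj_ofReal]]
    rw [Matrix.smul_apply, std_sandwich]
    simp [smul_eq_mul]
  rw [Finset.sum_congr rfl (fun p _ => hterm p)]
  rw [Fintype.sum_prod_type]
  have hb : ∀ q : Fin (M.n + 2),
      ∑ b : Fin 2, ((cc M q b : ℂ) * (cc M q b)) *
          (if (0 : Fin (M.n+2)) = tgt M.n b then pad ρ q q else 0) =
        ((cc M q 0 : ℂ) * cc M q 0) * pad ρ q q := by
    intro q
    rw [Fin.sum_univ_two, if_pos (tgt_zero M.n).symm, if_neg (tgt_one_ne M.n), mul_zero,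
      add_zero]
  rw [Finset.sum_congr rfl (fun q _ => hb q)]
  rw [Fin.sum_univ_castSucc]
  rw [(pad_apply_last ρ (Fin.last (M.n+1))).1, mul_zero, add_zero]
  have hc : ∀ q : Fin (M.n + 1),
      ((cc M q.castSucc 0 : ℂ) * cc M q.castSucc 0) * pad ρ q.castSucc q.castSucc =
        ((2⁻¹ : ℂ) + (if q ∈ M.Qpa then 2⁻¹ else 0) - (if q ∈ M.Qpr then 2⁻¹ else 0)) *
          ρ q q := by
    intro q
    rw [pad_apply_castSucc]
    congr 1
    unfold cc
    by_cases h1 : q ∈ M.Qpa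
    · have h2 : q ∉ M.Qpr := Finset.disjoint_left.mp M.disj h1
      rw [if_pos ((mem_QpaE M q).mpr h1)]
      simp [h1, h2]
      norm_num
    · rw [if_neg (fun hc => h1 ((mem_QpaE M q).mp hc))]
      by_cases h2 : q ∈ M.Qpr
      · rw [if_pos ((mem_QprE M q).mpr h2)]
        simp [h1, h2]
      · rw [if_neg (fun hc => h2 ((mem_QprE M q).mp hc))]
        simp only [h1, h2, if_false]
        rw [← Complex.ofReal_mul, Real.mul_self_sqrt (by norm_num)]
        norm_num
  rw [Finset.sum_congr rfl (fun q _ => hc q)]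
  simp only [add_mul, sub_mul, ite_mul, zero_mul]
  rw [Finset.sum_sub_distrib, Finset.sum_add_distrib, Finset.sum_ite_mem,
    Finset.sum_ite_mem, Finset.univ_inter, Finset.univ_inter, ← Finset.mul_sum,
    ← Finset.mul_sum, ← Finset.mul_sum]
  rfl

lemma build_fa (M : PostQFA α) (w : List α) :
    (build M).fa w = 2⁻¹ + (M.pacc w) / 2 - (M.prej w) / 2 := by
  unfold QFA.fa
  have hE : (build M).E = buildE M := rfl
  have hQ : (build M).Qa = ({0} : Finset (Fin (M.n + 2))) := rfl
  show ((projM ({0} : Finset (Fin (M.n + 2))) * qRun (buildE M) w).trace).re = _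
  rw [qRun_build, meas_trace0, trace_qRun]
  unfold PostQFA.pacc PostQFA.prej
  rw [trace_projM, trace_projM]
  simp [Complex.sub_re, Complex.add_re, Complex.mul_re]
  ring

end PQAL

/-- Every language in `PostQAL` is in `QAL`: it is recognized by some RT-QFA
with (strict) cutpoint `1/2`. -/
theorem PostQAL_subset_QAL {α : Type} [Fintype α] (L : Set (List α)) (hL : PostQAL L) :
    ∃ M : QFA α, L = {w : List α | 1 / 2 < M.fa w} := by
  obtain ⟨M, ε, hε0, hεh, hrec⟩ := hL
  refine ⟨PQAL.build M, ?_⟩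
  ext w
  simp only [Set.mem_setOf_eq]
  rw [PQAL.build_fa]
  have hsum : 0 < M.pacc w + M.prej w := M.postPos w
  constructor
  · intro hw
    have h1 : 1 - ε ≤ M.pacc w / (M.pacc w + M.prej w) := (hrec w).1 hw
    have h2 : (1 : ℝ)/2 < M.pacc w / (M.pacc w + M.prej w) := lt_of_lt_of_le (by linarith) h1
    have h3 : (1 : ℝ)/2 * (M.pacc w + M.prej w) < M.pacc w := (lt_div_iff₀ hsum).mp h2
    linarith
  · intro h12
    by_contra hw
    have h2 : M.pacc w / (M.pacc w + M.prej w) ≤ ε := (hrec w).2 hw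
    have h3 : M.pacc w / (M.pacc w + M.prej w) < 1/2 := lt_of_le_of_lt h2 hεh
    have h4 : M.pacc w < 1/2 * (M.pacc w + M.prej w) := (div_lt_iff₀ hsum).mp h3
    linarith
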